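/- arXiv:1503.02468 — 4 statements merged into one kernel-verified Lean document; each statement's English description precedes it below -/
import Mathlib

section
/- A genealogical tree F (a set of abstract families satisfying the parent/child axioms) consists of linearly independent vectors in ℤ^m: if ∑_k α_k f_k = 0 with α_k ∈ ℚ and f_k ∈ F distinct, then all α_k = 0. -/
/-- The (1-indexed) generation number of a basis index `j` of `ℤ^(N·2^(N−1))`:
`e_j ∈ A_i` iff `(i−1)·2^(N−1) + 1 ≤ j + 1 ≤ i·2^(N−1)` (0-indexed `j`). -/
def genOf (N : ℕ) (j : Fin (N * 2 ^ (N - 1))) : ℕ := (j : ℕ) / 2 ^ (N - 1) + 1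

/-- An abstract family: two distinct parents in generation `gen` and two distinct
children in generation `gen + 1`, with `1 ≤ gen ≤ N − 1`. -/
structure AbstractFamily (N : ℕ) where
  gen : ℕ
  j1 : Fin (N * 2 ^ (N - 1))
  j2 : Fin (N * 2 ^ (N - 1))
  j3 : Fin (N * 2 ^ (N - 1))
  j4 : Fin (N * 2 ^ (N - 1))
  gen_pos : 1 ≤ gen
  gen_le : gen ≤ N - 1
  hj1 : genOf N j1 = gen
  hj2 : genOf N j2 = gen
  hj3 : genOf N j3 = gen + 1
  hj4 : genOf N j4 = gen + 1
  parents_ne : j1 ≠ j2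
  children_ne : j3 ≠ j4

/-- The vector `e_{j₁} + e_{j₂} − e_{j₃} − e_{j₄} ∈ ℤ^m` associated to an abstract family. -/
def AbstractFamily.vec {N : ℕ} (f : AbstractFamily N) : Fin (N * 2 ^ (N - 1)) → ℤ :=
  Pi.single f.j1 1 + Pi.single f.j2 1 - Pi.single f.j3 1 - Pi.single f.j4 1

/-- `j` is a parent in the family `f`. -/
def AbstractFamily.isParent {N : ℕ} (f : AbstractFamily N)
    (j : Fin (N * 2 ^ (N - 1))) : Prop := j = f.j1 ∨ j = f.j2

/-- `j` is a child in the family `f`. -/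
def AbstractFamily.isChild {N : ℕ} (f : AbstractFamily N)
    (j : Fin (N * 2 ^ (N - 1))) : Prop := j = f.j3 ∨ j = f.j4

/-- A genealogical tree: every basis vector of generation `i ≤ N−1` is a parent in
exactly one family of generation number `i`; every basis vector of generation `i ≥ 2`
is a child in exactly one family of generation number `i−1`; and the sibling and the
spouse of a basis vector never coincide. -/
structure IsGenTree (N : ℕ) (F : Set (AbstractFamily N)) : Prop where
  parent_unique : ∀ j : Fin (N * 2 ^ (N - 1)), genOf N j ≤ N - 1 →
    ∃! f : AbstractFamily N, f ∈ F ∧ f.gen = genOf N j ∧ f.isParent j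
  child_unique : ∀ j : Fin (N * 2 ^ (N - 1)), 2 ≤ genOf N j →
    ∃! f : AbstractFamily N, f ∈ F ∧ f.gen = genOf N j - 1 ∧ f.isChild j
  sibling_ne_spouse : ∀ f ∈ F, ∀ g ∈ F, ∀ c s p : Fin (N * 2 ^ (N - 1)),
    ((c = f.j3 ∧ s = f.j4) ∨ (c = f.j4 ∧ s = f.j3)) →
    ((c = g.j1 ∧ p = g.j2) ∨ (c = g.j2 ∧ p = g.j1)) → s ≠ p

lemma vec_apply' {N : ℕ} (g : AbstractFamily N) (j : Fin (N * 2 ^ (N - 1))) :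
    g.vec j = (if j = g.j1 then (1:ℤ) else 0) + (if j = g.j2 then 1 else 0)
      - (if j = g.j3 then 1 else 0) - (if j = g.j4 then 1 else 0) := by
  simp [AbstractFamily.vec, Pi.single_apply]

/-- The family vectors of a genealogical tree are linearly independent over `ℚ`:
any vanishing rational linear combination of distinct families of `F` has all
coefficients zero. -/
theorem stmt5 (N : ℕ) (hN : 2 ≤ N) (F : Set (AbstractFamily N)) (hF : IsGenTree N F)
    (n : ℕ) (f : Fin n → AbstractFamily N) (hfF : ∀ k, f k ∈ F)
    (hinj : Function.Injective f) (α : Fin n → ℚ)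
    (hsum : ∀ j, ∑ k, α k * ((f k).vec j : ℚ) = 0) :
    ∀ k, α k = 0 := by
  suffices key : ∀ i : ℕ, ∀ k, (f k).gen ≤ i → α k = 0 by
    intro k; exact key (f k).gen k le_rfl
  intro i
  induction i with
  | zero => intro k hk; exact absurd (le_trans (f k).gen_pos hk) (by norm_num)
  | succ i ih =>
    intro k hk
    rcases lt_or_eq_of_le hk with h | h
    · exact ih k (Nat.lt_succ_iff.mp h)
    -- gen = i + 1; evaluate at the first parent coordinate
    set j := (f k).j1 with hj
    have hgenj : genOf N j = i + 1 := by rw [hj, (f k).hj1, h]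
    have hjle : genOf N j ≤ N - 1 := by rw [hgenj, ← h]; exact (f k).gen_le
    obtain ⟨g, hg, hgu⟩ := hF.parent_unique j hjle
    have hgk : f k = g := by
      apply hgu
      exact ⟨hfF k, by rw [hgenj, h], Or.inl rfl⟩
    have hterm : ∀ l, α l * ((f l).vec j : ℚ) = if l = k then α k else 0 := by
      intro l
      by_cases hlk : l = k
      · subst hlk
        have h2 : j ≠ (f l).j2 := fun e => (f l).parents_ne (e ▸ hj.symm ▸ rfl)
        have h3 : j ≠ (f l).j3 := by
          intro e
          have := (f l).hj3
          rw [← e, hgenj, ← h] at this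
          omega
        have h4 : j ≠ (f l).j4 := by
          intro e
          have := (f l).hj4
          rw [← e, hgenj, ← h] at this
          omega
        rw [hj] at h2 h3 h4
        simp [vec_apply', h2, h3, h4, hj]
      · simp only [if_neg hlk]
        by_cases hc : j = (f l).j3 ∨ j = (f l).j4
        · have hgenl : (f l).gen = i := by
            rcases hc with e | e
            · have := (f l).hj3; rw [← e, hgenj] at this; omega
            · have := (f l).hj4; rw [← e, hgenj] at this; omega
          rw [ih l (le_of_eq hgenl)]; ring
        · push_neg at hc
          have hp1 : j ≠ (f l).j1 := by
            intro e
            have hgl : (f l).gen = genOf N j := by rw [e, (f l).hj1]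
            have : f l = g := hgu (f l) ⟨hfF l, hgl.symm ▸ rfl, Or.inl e⟩
            exact hlk (hinj (this.trans hgk.symm))
          have hp2 : j ≠ (f l).j2 := by
            intro e
            have hgl : (f l).gen = genOf N j := by rw [e, (f l).hj2]
            have : f l = g := hgu (f l) ⟨hfF l, hgl.symm ▸ rfl, Or.inr e⟩
            exact hlk (hinj (this.trans hgk.symm))
          simp [vec_apply', hp1, hp2, hc.1, hc.2]
    have := hsum j
    rw [Finset.sum_congr rfl (fun l _ => hterm l)] at this
    simpa using this
end

section
/- Let F be a genealogical tree in ℤ^m and ⟨F⟩ = span_ℚ(F) ∩ ℤ^m. Every nonzero λ ∈ ⟨F⟩ has support of cardinality at least 4, and the support has cardinality exactly 4 if and only if λ is a nonzero rational (hence integer) multiple of a single abstract family. -/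
namespace AbstractFamily

variable {N : ℕ} (f : AbstractFamily N)

lemma genOf_of_isParent {j} (h : f.isParent j) : genOf N j = f.gen := by
  rcases h with h | h <;> subst h
  · exact f.hj1
  · exact f.hj2

lemma genOf_of_isChild {j} (h : f.isChild j) : genOf N j = f.gen + 1 := by
  rcases h with h | h <;> subst h
  · exact f.hj3
  · exact f.hj4

lemma j1_ne_j3 : f.j1 ≠ f.j3 := fun h => by have h1 := f.hj1; rw [h, f.hj3] at h1; omega
lemma j1_ne_j4 : f.j1 ≠ f.j4 := fun h => by have h1 := f.hj1; rw [h, f.hj4] at h1; omega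
lemma j2_ne_j3 : f.j2 ≠ f.j3 := fun h => by have h1 := f.hj2; rw [h, f.hj3] at h1; omega
lemma j2_ne_j4 : f.j2 ≠ f.j4 := fun h => by have h1 := f.hj2; rw [h, f.hj4] at h1; omega

lemma vec_apply (j) : f.vec j = (if j = f.j1 then 1 else 0) + (if j = f.j2 then 1 else 0)
    - (if j = f.j3 then 1 else 0) - (if j = f.j4 then 1 else 0) := by
  simp [vec, Pi.single_apply]

lemma vec_of_isParent {j} (h : f.isParent j) : f.vec j = 1 := by
  rcases h with h | h <;> subst h <;> rw [vec_apply] <;>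
    simp [f.parents_ne, f.parents_ne.symm, f.j1_ne_j3, f.j1_ne_j4, f.j2_ne_j3, f.j2_ne_j4]

lemma vec_of_isChild {j} (h : f.isChild j) : f.vec j = -1 := by
  rcases h with h | h <;> subst h <;> rw [vec_apply] <;>
    simp [f.children_ne, f.children_ne.symm, (f.j1_ne_j3).symm, (f.j1_ne_j4).symm,
      (f.j2_ne_j3).symm, (f.j2_ne_j4).symm]

lemma vec_of_not {j} (hp : ¬ f.isParent j) (hc : ¬ f.isChild j) : f.vec j = 0 := by
  rw [isParent] at hp; rw [isChild] at hc
  push_neg at hp hc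
  rw [vec_apply]
  simp [hp.1, hp.2, hc.1, hc.2]

lemma not_isParent_isChild {j} (hp : f.isParent j) (hc : f.isChild j) : False := by
  have h1 := f.genOf_of_isParent hp
  have h2 := f.genOf_of_isChild hc
  omega

end AbstractFamily

lemma parent_eq {N : ℕ} {F : Set (AbstractFamily N)} (hF : IsGenTree N F)
    {f g : AbstractFamily N} (hf : f ∈ F) (hg : g ∈ F) {j}
    (hfj : f.isParent j) (hgj : g.isParent j) : f = g := by
  have h1 := f.genOf_of_isParent hfj
  have h2 := g.genOf_of_isParent hgj
  obtain ⟨u, -, hu⟩ := hF.parent_unique j (by rw [h1]; exact f.gen_le)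
  exact (hu f ⟨hf, h1.symm, hfj⟩).trans (hu g ⟨hg, h2.symm, hgj⟩).symm

lemma child_eq {N : ℕ} {F : Set (AbstractFamily N)} (hF : IsGenTree N F)
    {f g : AbstractFamily N} (hf : f ∈ F) (hg : g ∈ F) {j}
    (hfj : f.isChild j) (hgj : g.isChild j) : f = g := by
  have h1 := f.genOf_of_isChild hfj
  have h2 := g.genOf_of_isChild hgj
  have hp := f.gen_pos
  obtain ⟨u, -, hu⟩ := hF.child_unique j (by omega)
  exact (hu f ⟨hf, by omega, hfj⟩).trans (hu g ⟨hg, by omega, hgj⟩).symm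

lemma spouse_ne {N : ℕ} {F : Set (AbstractFamily N)} (hF : IsGenTree N F)
    {f g : AbstractFamily N} (hf : f ∈ F) (hg : g ∈ F)
    (h3 : g.isParent f.j3) (h4 : g.isParent f.j4) : False := by
  have hne := f.children_ne
  rcases h3 with h3 | h3
  · have h4' : f.j4 = g.j2 := by
      rcases h4 with h4 | h4
      · exact absurd (h3.symm ▸ h4.symm ▸ rfl : f.j3 = f.j4) hne
      · exact h4
    exact hF.sibling_ne_spouse f hf g hg f.j3 f.j4 f.j4
      (Or.inl ⟨rfl, rfl⟩) (Or.inl ⟨h3, h4'⟩) rfl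
  · have h4' : f.j4 = g.j1 := by
      rcases h4 with h4 | h4
      · exact h4
      · exact absurd (h3.symm ▸ h4.symm ▸ rfl : f.j3 = f.j4) hne
    exact hF.sibling_ne_spouse f hf g hg f.j3 f.j4 f.j4
      (Or.inl ⟨rfl, rfl⟩) (Or.inr ⟨h3, h4'⟩) rfl


/-- Every nonzero `λ ∈ ⟨F⟩ = span_ℚ(F) ∩ ℤ^m` has support of cardinality at least `4`,
and its support has cardinality exactly `4` if and only if `λ` is a nonzero integer
multiple of the vector of a single abstract family of `F`. -/
theorem stmt6 (N : ℕ) (hN : 2 ≤ N) (F : Set (AbstractFamily N)) (hF : IsGenTree N F)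
    (lam : Fin (N * 2 ^ (N - 1)) → ℤ) (hlam : lam ≠ 0)
    (hspan : (fun j => (lam j : ℚ)) ∈
      Submodule.span ℚ ((fun f : AbstractFamily N => fun j => ((f.vec j : ℚ))) '' F)) :
    4 ≤ (Finset.univ.filter fun j => lam j ≠ 0).card ∧
      ((Finset.univ.filter fun j => lam j ≠ 0).card = 4 ↔
        ∃ f ∈ F, ∃ c : ℤ, c ≠ 0 ∧ lam = c • f.vec) := by
  classical
  rw [Finsupp.mem_span_image_iff_linearCombination] at hspan
  obtain ⟨l, hlsupp, hl⟩ := hspan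
  rw [Finsupp.mem_supported] at hlsupp
  have hSF : ∀ f ∈ l.support, f ∈ F := fun f hf => hlsupp hf
  have hv : ∀ j, (lam j : ℚ) = ∑ g ∈ l.support, l g * ((g.vec j : ℤ) : ℚ) := by
    intro j
    have h := congrFun hl j
    rw [← h]
    simp [Finsupp.linearCombination_apply, Finsupp.sum, Finset.sum_apply]
  have hcoord : ∀ j, (lam j : ℚ) =
      (∑ g ∈ l.support.filter (fun g => g.isParent j), l g)
      - (∑ g ∈ l.support.filter (fun g => g.isChild j), l g) := by
    intro j
    rw [hv j, Finset.sum_filter, Finset.sum_filter, ← Finset.sum_sub_distrib]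
    apply Finset.sum_congr rfl
    intro g _
    by_cases hp : g.isParent j
    · have hc : ¬ g.isChild j := fun hc => g.not_isParent_isChild hp hc
      rw [g.vec_of_isParent hp]
      simp [hp, hc]
    · by_cases hc : g.isChild j
      · rw [g.vec_of_isChild hc]
        simp [hp, hc]
      · rw [g.vec_of_not hp hc]
        simp [hp, hc]
  have hl0 : l ≠ 0 := by
    rintro rfl
    apply hlam
    funext j
    have h := hv j
    simp only [Finsupp.support_zero, Finset.sum_empty] at h
    exact_mod_cast h
  have hSne : l.support.Nonempty := Finsupp.support_nonempty_iff.mpr hl0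
  have hgne : (l.support.image (fun f => f.gen)).Nonempty := hSne.image _
  set i0 := (l.support.image (fun f => f.gen)).min' hgne with hi0def
  set i1 := (l.support.image (fun f => f.gen)).max' hgne with hi1def
  have hgenlow : ∀ g ∈ l.support, i0 ≤ g.gen :=
    fun g hg => Finset.min'_le _ _ (Finset.mem_image_of_mem _ hg)
  have hgenhigh : ∀ g ∈ l.support, g.gen ≤ i1 :=
    fun g hg => Finset.le_max' _ _ (Finset.mem_image_of_mem _ hg)
  obtain ⟨f0, hf0S, hf0gen⟩ : ∃ f ∈ l.support, f.gen = i0 := by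
    have h := Finset.min'_mem (l.support.image (fun f => f.gen)) hgne
    rw [Finset.mem_image] at h
    obtain ⟨f, hf, hfg⟩ := h
    exact ⟨f, hf, hfg⟩
  obtain ⟨f1, hf1S, hf1gen⟩ : ∃ f ∈ l.support, f.gen = i1 := by
    have h := Finset.max'_mem (l.support.image (fun f => f.gen)) hgne
    rw [Finset.mem_image] at h
    obtain ⟨f, hf, hfg⟩ := h
    exact ⟨f, hf, hfg⟩
  have hi01 : i0 ≤ i1 := hf1gen ▸ hgenlow f1 hf1S
  have hPfilter : ∀ (j) (f), f ∈ l.support → f.isParent j →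
      l.support.filter (fun g => g.isParent j) = {f} := by
    intro j f hf hfj
    apply Finset.eq_singleton_iff_unique_mem.mpr
    refine ⟨Finset.mem_filter.mpr ⟨hf, hfj⟩, ?_⟩
    intro g hg
    rw [Finset.mem_filter] at hg
    exact parent_eq hF (hSF g hg.1) (hSF f hf) hg.2 hfj
  have hCfilter : ∀ (j) (f), f ∈ l.support → f.isChild j →
      l.support.filter (fun g => g.isChild j) = {f} := by
    intro j f hf hfj
    apply Finset.eq_singleton_iff_unique_mem.mpr
    refine ⟨Finset.mem_filter.mpr ⟨hf, hfj⟩, ?_⟩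
    intro g hg
    rw [Finset.mem_filter] at hg
    exact child_eq hF (hSF g hg.1) (hSF f hf) hg.2 hfj
  have hlow : ∀ f ∈ l.support, f.gen = i0 → ∀ j, f.isParent j → (lam j : ℚ) = l f := by
    intro f hf hgen j hj
    rw [hcoord j, hPfilter j f hf hj]
    have hempty : l.support.filter (fun g => g.isChild j) = ∅ := by
      rw [Finset.filter_eq_empty_iff]
      intro g hg hc
      have h1 := g.genOf_of_isChild hc
      have h2 := f.genOf_of_isParent hj
      have h3 := hgenlow g hg
      omega
    rw [hempty]
    simp
  have hhigh : ∀ f ∈ l.support, f.gen = i1 → ∀ j, f.isChild j → (lam j : ℚ) = - l f := by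
    intro f hf hgen j hj
    rw [hcoord j, hCfilter j f hf hj]
    have hempty : l.support.filter (fun g => g.isParent j) = ∅ := by
      rw [Finset.filter_eq_empty_iff]
      intro g hg hp
      have h1 := g.genOf_of_isParent hp
      have h2 := f.genOf_of_isChild hj
      have h3 := hgenhigh g hg
      omega
    rw [hempty]
    simp
  set Sg : ℕ → Finset (AbstractFamily N) :=
    fun i => l.support.filter (fun g => g.gen = i) with hSg
  set Tlow := (Sg i0).biUnion (fun f => ({f.j1, f.j2} : Finset _)) with hTlow
  set Thigh := (Sg i1).biUnion (fun f => ({f.j3, f.j4} : Finset _)) with hThigh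
  have hmemTlow : ∀ j, j ∈ Tlow ↔ ∃ f ∈ Sg i0, f.isParent j := by
    intro j
    simp [hTlow, Finset.mem_biUnion, AbstractFamily.isParent]
  have hmemThigh : ∀ j, j ∈ Thigh ↔ ∃ f ∈ Sg i1, f.isChild j := by
    intro j
    simp [hThigh, Finset.mem_biUnion, AbstractFamily.isChild]
  have hTlowcard : Tlow.card = 2 * (Sg i0).card := by
    rw [hTlow, Finset.card_biUnion]
    · rw [Finset.sum_congr rfl (fun f _ => Finset.card_pair f.parents_ne)]
      rw [Finset.sum_const, smul_eq_mul, mul_comm]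
    · intro f hf g hg hne
      simp only [Function.onFun, Finset.mem_coe] at hf hg ⊢
      rw [Finset.disjoint_left]
      intro j hjf hjg
      apply hne
      rw [Finset.mem_filter] at hf hg
      refine parent_eq hF (hSF f hf.1) (hSF g hg.1) (j := j) ?_ ?_
      · rcases Finset.mem_insert.mp hjf with h | h
        · exact Or.inl h
        · exact Or.inr (Finset.mem_singleton.mp h)
      · rcases Finset.mem_insert.mp hjg with h | h
        · exact Or.inl h
        · exact Or.inr (Finset.mem_singleton.mp h)
  have hThighcard : Thigh.card = 2 * (Sg i1).card := by
    rw [hThigh, Finset.card_biUnion]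
    · rw [Finset.sum_congr rfl (fun f _ => Finset.card_pair f.children_ne)]
      rw [Finset.sum_const, smul_eq_mul, mul_comm]
    · intro f hf g hg hne
      simp only [Function.onFun, Finset.mem_coe] at hf hg ⊢
      rw [Finset.disjoint_left]
      intro j hjf hjg
      apply hne
      rw [Finset.mem_filter] at hf hg
      refine child_eq hF (hSF f hf.1) (hSF g hg.1) (j := j) ?_ ?_
      · rcases Finset.mem_insert.mp hjf with h | h
        · exact Or.inl h
        · exact Or.inr (Finset.mem_singleton.mp h)
      · rcases Finset.mem_insert.mp hjg with h | h
        · exact Or.inl h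
        · exact Or.inr (Finset.mem_singleton.mp h)
  have hTlowsub : Tlow ⊆ Finset.univ.filter (fun j => lam j ≠ 0) := by
    intro j hj
    obtain ⟨f, hf, hfp⟩ := (hmemTlow j).mp hj
    rw [Finset.mem_filter] at hf
    have h := hlow f hf.1 hf.2 j hfp
    rw [Finset.mem_filter]
    refine ⟨Finset.mem_univ _, fun h0 => ?_⟩
    rw [h0] at h
    exact Finsupp.mem_support_iff.mp hf.1 (by exact_mod_cast h.symm)
  have hThighsub : Thigh ⊆ Finset.univ.filter (fun j => lam j ≠ 0) := by
    intro j hj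
    obtain ⟨f, hf, hfc⟩ := (hmemThigh j).mp hj
    rw [Finset.mem_filter] at hf
    have h := hhigh f hf.1 hf.2 j hfc
    rw [Finset.mem_filter]
    refine ⟨Finset.mem_univ _, fun h0 => ?_⟩
    rw [h0] at h
    push_cast at h
    exact Finsupp.mem_support_iff.mp hf.1 (by linarith)
  have hdisjT : Disjoint Tlow Thigh := by
    rw [Finset.disjoint_left]
    intro j hj1 hj2
    obtain ⟨f, hf, hfp⟩ := (hmemTlow j).mp hj1
    obtain ⟨g, hg, hgc⟩ := (hmemThigh j).mp hj2
    rw [Finset.mem_filter] at hf hg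
    have h1 := f.genOf_of_isParent hfp
    have h2 := g.genOf_of_isChild hgc
    omega
  have hcardsum : 2 * (Sg i0).card + 2 * (Sg i1).card ≤
      (Finset.univ.filter (fun j => lam j ≠ 0)).card := by
    rw [← hTlowcard, ← hThighcard, ← Finset.card_union_of_disjoint hdisjT]
    exact Finset.card_le_card (Finset.union_subset hTlowsub hThighsub)
  have ha : 1 ≤ (Sg i0).card :=
    Finset.card_pos.mpr ⟨f0, Finset.mem_filter.mpr ⟨hf0S, hf0gen⟩⟩
  have hb : 1 ≤ (Sg i1).card :=
    Finset.card_pos.mpr ⟨f1, Finset.mem_filter.mpr ⟨hf1S, hf1gen⟩⟩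
  refine ⟨by omega, ?_, ?_⟩
  · intro h4
    have hab : (Sg i0).card = 1 ∧ (Sg i1).card = 1 := by omega
    have hsuppeq : Finset.univ.filter (fun j => lam j ≠ 0) = Tlow ∪ Thigh := by
      symm
      apply Finset.eq_of_subset_of_card_le (Finset.union_subset hTlowsub hThighsub)
      rw [Finset.card_union_of_disjoint hdisjT, hTlowcard, hThighcard, h4]
      omega
    have hmid : ∀ j, i0 < genOf N j → genOf N j ≤ i1 → lam j = 0 := by
      intro j hji hjle
      by_contra h
      have hj : j ∈ Finset.univ.filter (fun j => lam j ≠ 0) :=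
        Finset.mem_filter.mpr ⟨Finset.mem_univ _, h⟩
      rw [hsuppeq, Finset.mem_union] at hj
      rcases hj with hj | hj
      · obtain ⟨f, hf, hfp⟩ := (hmemTlow j).mp hj
        rw [Finset.mem_filter] at hf
        have := f.genOf_of_isParent hfp
        omega
      · obtain ⟨f, hf, hfc⟩ := (hmemThigh j).mp hj
        rw [Finset.mem_filter] at hf
        have := f.genOf_of_isChild hfc
        omega
    have hi : i0 = i1 := by
      by_contra hne01
      have hlt : i0 < i1 := lt_of_le_of_ne hi01 hne01
      have hprop : ∀ f ∈ l.support, f.gen < i1 → ∀ j, f.isChild j →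
          ∃ g ∈ l.support, g.gen = f.gen + 1 ∧ g.isParent j ∧ l g = l f := by
        intro f hf hflt j hj
        have hgenj := f.genOf_of_isChild hj
        have hg0 := hgenlow f hf
        have h0 : lam j = 0 := hmid j (by omega) (by omega)
        have hc := hcoord j
        rw [hCfilter j f hf hj, h0, Finset.sum_singleton] at hc
        push_cast at hc
        have hsum : ∑ g ∈ l.support.filter (fun g => g.isParent j), l g = l f := by linarith
        have hfne : l f ≠ 0 := Finsupp.mem_support_iff.mp hf
        have hnonempty : (l.support.filter (fun g => g.isParent j)).Nonempty := by
          rw [Finset.nonempty_iff_ne_empty]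
          intro hemp
          rw [hemp, Finset.sum_empty] at hsum
          exact hfne hsum.symm
        obtain ⟨g, hg⟩ := hnonempty
        have hgmem := Finset.mem_filter.mp hg
        have hfilt := hPfilter j g hgmem.1 hgmem.2
        rw [hfilt, Finset.sum_singleton] at hsum
        refine ⟨g, hgmem.1, ?_, hgmem.2, hsum⟩
        have := g.genOf_of_isParent hgmem.2
        omega
      have h2base : 2 ≤ (Sg (i0+1)).card := by
        obtain ⟨g3, hg3S, hg3gen, hg3p, hg3l⟩ := hprop f0 hf0S (by omega) f0.j3 (Or.inl rfl)
        obtain ⟨g4, hg4S, hg4gen, hg4p, hg4l⟩ := hprop f0 hf0S (by omega) f0.j4 (Or.inr rfl)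
        have hne : g3 ≠ g4 := by
          intro h
          exact spouse_ne hF (hSF f0 hf0S) (hSF g3 hg3S) hg3p (h ▸ hg4p)
        have hsub : ({g3, g4} : Finset _) ⊆ Sg (i0+1) := by
          intro x hx
          rcases Finset.mem_insert.mp hx with h | h
          · subst h; exact Finset.mem_filter.mpr ⟨hg3S, by omega⟩
          · rw [Finset.mem_singleton] at h; subst h
            exact Finset.mem_filter.mpr ⟨hg4S, by omega⟩
        calc 2 = ({g3, g4} : Finset _).card := (Finset.card_pair hne).symm
          _ ≤ _ := Finset.card_le_card hsub
      have hstep : ∀ i, i0 + 1 ≤ i → i < i1 → 2 ≤ (Sg i).card → 2 ≤ (Sg (i+1)).card := by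
        intro i hi1le hilt hcard
        set C := (Sg i).biUnion (fun f => ({f.j3, f.j4} : Finset _)) with hC
        have hCcard : C.card = 2 * (Sg i).card := by
          rw [hC, Finset.card_biUnion]
          · rw [Finset.sum_congr rfl (fun f _ => Finset.card_pair f.children_ne)]
            rw [Finset.sum_const, smul_eq_mul, mul_comm]
          · intro f hf g hg hne
            simp only [Function.onFun, Finset.mem_coe] at hf hg ⊢
            rw [Finset.disjoint_left]
            intro j hjf hjg
            apply hne
            rw [Finset.mem_filter] at hf hg
            refine child_eq hF (hSF f hf.1) (hSF g hg.1) (j := j) ?_ ?_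
            · rcases Finset.mem_insert.mp hjf with h | h
              · exact Or.inl h
              · exact Or.inr (Finset.mem_singleton.mp h)
            · rcases Finset.mem_insert.mp hjg with h | h
              · exact Or.inl h
              · exact Or.inr (Finset.mem_singleton.mp h)
        have hCsub : C ⊆ (Sg (i+1)).biUnion (fun g => ({g.j1, g.j2} : Finset _)) := by
          intro j hj
          rw [hC, Finset.mem_biUnion] at hj
          obtain ⟨f, hf, hjf⟩ := hj
          rw [Finset.mem_filter] at hf
          have hfc : f.isChild j := by
            rcases Finset.mem_insert.mp hjf with h | h
            · exact Or.inl h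
            · exact Or.inr (Finset.mem_singleton.mp h)
          obtain ⟨g, hgS, hggen, hgp, -⟩ := hprop f hf.1 (by omega) j hfc
          rw [Finset.mem_biUnion]
          refine ⟨g, Finset.mem_filter.mpr ⟨hgS, by omega⟩, ?_⟩
          rcases hgp with h | h
          · exact Finset.mem_insert.mpr (Or.inl h)
          · exact Finset.mem_insert.mpr (Or.inr (Finset.mem_singleton.mpr h))
        have h1 := Finset.card_le_card hCsub
        have h2 := Finset.card_biUnion_le (s := Sg (i+1))
          (t := fun g => ({g.j1, g.j2} : Finset _))
        have h3 : ∑ g ∈ Sg (i+1), ({g.j1, g.j2} : Finset _).card ≤ 2 * (Sg (i+1)).card := by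
          rw [Finset.sum_congr rfl (fun f _ => Finset.card_pair f.parents_ne)]
          rw [Finset.sum_const, smul_eq_mul, mul_comm]
        omega
      have hind : ∀ i, i0 + 1 ≤ i → i ≤ i1 → 2 ≤ (Sg i).card := by
        refine Nat.le_induction ?_ ?_
        · intro _; exact h2base
        · intro n hn ih hle
          exact hstep n hn (by omega) (ih (by omega))
      have := hind i1 (by omega) le_rfl
      omega
    have hsupeq : l.support = {f0} := by
      have hall : ∀ g ∈ l.support, g.gen = i0 :=
        fun g hg => le_antisymm (hi ▸ hgenhigh g hg) (hgenlow g hg)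
      have h1 : l.support = Sg i0 := by
        apply Finset.ext
        intro g
        simp only [hSg, Finset.mem_filter]
        exact ⟨fun h => ⟨h, hall g h⟩, fun h => h.1⟩
      obtain ⟨x, hx⟩ := Finset.card_eq_one.mp hab.1
      have hmem : f0 ∈ Sg i0 := Finset.mem_filter.mpr ⟨hf0S, hf0gen⟩
      rw [hx, Finset.mem_singleton] at hmem
      rw [h1, hx, hmem]
    have hvj : ∀ j, (lam j : ℚ) = l f0 * ((f0.vec j : ℤ) : ℚ) := by
      intro j
      rw [hv j, hsupeq, Finset.sum_singleton]
    have hc1 : ((lam f0.j1 : ℤ) : ℚ) = l f0 := by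
      rw [hvj, f0.vec_of_isParent (Or.inl rfl)]
      simp
    refine ⟨f0, hSF f0 hf0S, lam f0.j1, ?_, ?_⟩
    · intro h
      rw [h] at hc1
      push_cast at hc1
      exact Finsupp.mem_support_iff.mp hf0S hc1.symm
    · funext j
      have h2 : (lam j : ℚ) = ((lam f0.j1 * f0.vec j : ℤ) : ℚ) := by
        push_cast
        rw [hvj j, ← hc1]
      have h3 : lam j = lam f0.j1 * f0.vec j := by exact_mod_cast h2
      simpa using h3
  · rintro ⟨f, hfF, c, hc0, hlamres⟩
    have hset : Finset.univ.filter (fun j => lam j ≠ 0) =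
        ({f.j1, f.j2, f.j3, f.j4} : Finset _) := by
      apply Finset.ext
      intro j
      simp only [Finset.mem_filter, Finset.mem_univ, true_and, Finset.mem_insert,
        Finset.mem_singleton]
      rw [hlamres]
      simp only [Pi.smul_apply, smul_eq_mul, ne_eq, mul_eq_zero, not_or]
      constructor
      · intro h
        by_contra hall
        push_neg at hall
        exact h.2 (f.vec_of_not
          (fun hp => hp.elim (fun e => hall.1 e) (fun e => hall.2.1 e))
          (fun hc => hc.elim (fun e => hall.2.2.1 e) (fun e => hall.2.2.2 e)))
      · intro h
        refine ⟨hc0, ?_⟩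
        rcases h with rfl | rfl | rfl | rfl
        · simp [f.vec_of_isParent (Or.inl rfl)]
        · simp [f.vec_of_isParent (Or.inr rfl)]
        · simp [f.vec_of_isChild (Or.inl rfl)]
        · simp [f.vec_of_isChild (Or.inr rfl)]
    rw [hset]
    rw [Finset.card_insert_of_notMem (by simp [f.parents_ne, f.j1_ne_j3, f.j1_ne_j4]),
      Finset.card_insert_of_notMem (by simp [f.j2_ne_j3, f.j2_ne_j4]),
      Finset.card_pair f.children_ne]
end

section
/- Let F be a genealogical tree in ℤ^m. Then ⟨F⟩ := span_ℚ(F) ∩ ℤ^m equals span_ℤ(F), i.e. every integer vector that is a rational linear combination of the family vectors is already an integer linear combination of them. -/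
section Aux

open Finset

lemma vecQ_apply {N : ℕ} (f : AbstractFamily N) (j : Fin (N * 2 ^ (N - 1))) :
    ((f.vec j : ℤ) : ℚ) = (if j = f.j1 then 1 else 0) + (if j = f.j2 then 1 else 0)
      - (if j = f.j3 then 1 else 0) - (if j = f.j4 then 1 else 0) := by
  simp only [AbstractFamily.vec, Pi.sub_apply, Pi.add_apply, Pi.single_apply]
  split_ifs <;> norm_num

lemma sum_mul_ite_aux {α : Type*} [DecidableEq α] (S : Finset α) (l : α → ℚ)
    (p : α → Prop) [DecidablePred p] :
    ∑ g ∈ S, l g * (if p g then (1:ℚ) else 0) = ∑ g ∈ S.filter p, l g := by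
  rw [Finset.sum_filter]
  refine Finset.sum_congr rfl fun g _ => ?_
  split <;> ring

lemma sum_filter_of_unique {α : Type*} [DecidableEq α] (S : Finset α) (l : α → ℚ)
    (p : α → Prop) [DecidablePred p] (g0 : α)
    (h : ∀ g ∈ S, p g → g = g0) :
    ∑ g ∈ S.filter p, l g = if g0 ∈ S ∧ p g0 then l g0 else 0 := by
  split_ifs with h0
  · rw [show S.filter p = {g0} from ?_, Finset.sum_singleton]
    apply Finset.Subset.antisymm
    · intro g hg
      rw [Finset.mem_filter] at hg
      simp [h g hg.1 hg.2]
    · intro g hg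
      rw [Finset.mem_singleton] at hg
      subst hg
      exact Finset.mem_filter.2 ⟨h0.1, h0.2⟩
  · rw [show S.filter p = ∅ from ?_, Finset.sum_empty]
    rw [Finset.filter_eq_empty_iff]
    intro g hg hp
    have := h g hg hp
    subst this
    exact h0 ⟨hg, hp⟩

/-- Componentwise cast `ℤ^m → ℚ^m` as a `ℤ`-linear map. -/
def castLM (m : ℕ) : (Fin m → ℤ) →ₗ[ℤ] (Fin m → ℚ) where
  toFun v := fun j => (v j : ℚ)
  map_add' u v := by funext j; simp
  map_smul' c v := by funext j; simp

end Aux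

/-- For a genealogical tree `F`, the lattice `⟨F⟩ = span_ℚ(F) ∩ ℤ^m` equals the
integer span of the family vectors: an integer vector is a rational linear combination
of the family vectors iff it is an integer linear combination of them. -/
theorem stmt7 (N : ℕ) (hN : 2 ≤ N) (F : Set (AbstractFamily N)) (hF : IsGenTree N F)
    (lam : Fin (N * 2 ^ (N - 1)) → ℤ) :
    (fun j => (lam j : ℚ)) ∈
        Submodule.span ℚ ((fun f : AbstractFamily N => fun j => ((f.vec j : ℚ))) '' F) ↔
      lam ∈ Submodule.span ℤ (AbstractFamily.vec '' F) := by
  classical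
  constructor
  · -- hard direction: rational combination ⇒ integer combination
    intro hmem
    rw [Finsupp.mem_span_image_iff_linearCombination] at hmem
    obtain ⟨l, hlF, hl⟩ := hmem
    rw [Finsupp.mem_supported] at hlF
    set S := l.support with hSdef
    have hS : ∀ g ∈ S, g ∈ F := fun g hg => hlF hg
    have hcoord : ∀ j, (lam j : ℚ) = ∑ g ∈ S, l g * ((g.vec j : ℤ) : ℚ) := by
      intro j
      have h1 := congrFun hl j
      rw [Finsupp.linearCombination_apply] at h1
      rw [Finsupp.sum] at h1
      rw [← h1, Finset.sum_apply]
      simp [smul_eq_mul, hSdef]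
    -- the main coordinate identity at the first child of a family
    have main : ∀ f ∈ S, (lam f.j3 : ℚ) =
        (∑ g ∈ S.filter (fun g => f.j3 = g.j1), l g)
        + (∑ g ∈ S.filter (fun g => f.j3 = g.j2), l g) - l f := by
      intro f hf
      have hgen3 : genOf N f.j3 = f.gen + 1 := f.hj3
      have h2 : 2 ≤ genOf N f.j3 := by have := f.gen_pos; omega
      obtain ⟨u, hu, huniq⟩ := hF.child_unique f.j3 h2
      have hfu : f = u := by
        refine huniq f ⟨hS f hf, by omega, Or.inl rfl⟩
      have hC : ∀ g ∈ S, f.j3 = g.j3 → g = f := by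
        intro g hg hgj
        have hg3 : genOf N g.j3 = g.gen + 1 := g.hj3
        have hgu : g = u := huniq g ⟨hS g hg, by rw [← hgj] at hg3; omega, Or.inl hgj⟩
        rw [hgu, ← hfu]
      have hD : ∀ g ∈ S, ¬ (f.j3 = g.j4) := by
        intro g hg hgj
        have hg4 : genOf N g.j4 = g.gen + 1 := g.hj4
        have hgu : g = u := huniq g ⟨hS g hg, by rw [← hgj] at hg4; omega, Or.inr hgj⟩
        rw [hgu, ← hfu] at hgj
        exact f.children_ne hgj
      have e2 : (lam f.j3 : ℚ) = ∑ g ∈ S, (l g * (if f.j3 = g.j1 then 1 else 0)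
          + l g * (if f.j3 = g.j2 then 1 else 0)
          - l g * (if f.j3 = g.j3 then 1 else 0)
          - l g * (if f.j3 = g.j4 then 1 else 0)) := by
        rw [hcoord f.j3]
        refine Finset.sum_congr rfl fun g _ => ?_
        rw [vecQ_apply]
        ring
      rw [e2, Finset.sum_sub_distrib, Finset.sum_sub_distrib, Finset.sum_add_distrib,
        sum_mul_ite_aux, sum_mul_ite_aux, sum_mul_ite_aux, sum_mul_ite_aux,
        sum_filter_of_unique S l _ f hC]
      have hDf : S.filter (fun g => f.j3 = g.j4) = ∅ := by
        rw [Finset.filter_eq_empty_iff]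
        exact hD
      rw [hDf, Finset.sum_empty]
      simp [hf]
    -- downward induction on generation: all coefficients are integers
    have key : ∀ k : ℕ, ∀ f ∈ S, N - 1 - f.gen ≤ k → ∃ n : ℤ, l f = (n : ℚ) := by
      intro k
      induction k with
      | zero =>
        intro f hf hk
        have hgen : f.gen = N - 1 := by have := f.gen_le; omega
        have hgen3 : genOf N f.j3 = f.gen + 1 := f.hj3
        have hA : S.filter (fun g => f.j3 = g.j1) = ∅ := by
          rw [Finset.filter_eq_empty_iff]
          intro g hg hgj
          have h1 : genOf N g.j1 = g.gen := g.hj1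
          have h2 := g.gen_le
          rw [← hgj] at h1
          omega
        have hB : S.filter (fun g => f.j3 = g.j2) = ∅ := by
          rw [Finset.filter_eq_empty_iff]
          intro g hg hgj
          have h1 : genOf N g.j2 = g.gen := g.hj2
          have h2 := g.gen_le
          rw [← hgj] at h1
          omega
        refine ⟨-(lam f.j3), ?_⟩
        have := main f hf
        rw [hA, hB, Finset.sum_empty] at this
        push_cast
        linarith
      | succ k ih =>
        intro f hf hk
        by_cases hk' : N - 1 - f.gen ≤ k
        · exact ih f hf hk'
        · have hlt : f.gen + 1 ≤ N - 1 := by have := f.gen_le; omega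
          have hgen3 : genOf N f.j3 = f.gen + 1 := f.hj3
          obtain ⟨u, ⟨huF, hugen, hup⟩, huniq⟩ := hF.parent_unique f.j3 (by omega)
          have hA : ∀ g ∈ S, f.j3 = g.j1 → g = u := by
            intro g hg hgj
            have h1 : genOf N g.j1 = g.gen := g.hj1
            rw [← hgj] at h1
            exact huniq g ⟨hS g hg, h1.symm, Or.inl hgj⟩
          have hB : ∀ g ∈ S, f.j3 = g.j2 → g = u := by
            intro g hg hgj
            have h1 : genOf N g.j2 = g.gen := g.hj2
            rw [← hgj] at h1
            exact huniq g ⟨hS g hg, h1.symm, Or.inr hgj⟩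
          obtain ⟨n, hn⟩ : ∃ n : ℤ, l u = (n : ℚ) := by
            by_cases huS : u ∈ S
            · exact ih u huS (by omega)
            · exact ⟨0, by simpa using Finsupp.notMem_support_iff.1 huS⟩
          have hlu0 : u ∉ S → l u = 0 := fun h => Finsupp.notMem_support_iff.1 h
          refine ⟨(if f.j3 = u.j1 then n else 0) + (if f.j3 = u.j2 then n else 0)
            - lam f.j3, ?_⟩
          have hmain := main f hf
          rw [sum_filter_of_unique S l _ u hA, sum_filter_of_unique S l _ u hB] at hmain
          have hcol : ∀ p : Prop, ∀ _ : Decidable p,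
              (if u ∈ S ∧ p then l u else 0) = if p then l u else 0 := by
            intro p hp
            by_cases huS : u ∈ S
            · simp [huS]
            · simp [huS, hlu0 huS]
          rw [hcol _ _, hcol _ _] at hmain
          push_cast
          split_ifs at hmain ⊢ <;> linarith [hn]
    have hint : ∀ f ∈ S, ((l f).num : ℚ) = l f := by
      intro f hf
      obtain ⟨n, hn⟩ := key N f hf (by omega)
      rw [hn]
      simp
    have hrepr : lam = ∑ f ∈ S, (l f).num • f.vec := by
      funext j
      have h1 := hcoord j
      have : ((∑ f ∈ S, (l f).num • f.vec) j : ℚ) = (lam j : ℚ) := by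
        rw [h1, Finset.sum_apply]
        push_cast
        refine Finset.sum_congr rfl fun f hf => ?_
        simp only [Pi.smul_apply, smul_eq_mul]
        push_cast
        rw [hint f hf]
      exact_mod_cast this.symm
    rw [hrepr]
    exact Submodule.sum_mem _ fun f hf =>
      Submodule.smul_mem _ _ (Submodule.subset_span ⟨f, hS f hf, rfl⟩)
  · -- easy direction: integer combination ⇒ rational combination
    intro hmem
    have hle : Submodule.span ℤ (AbstractFamily.vec '' F) ≤
        Submodule.comap (castLM (N * 2 ^ (N - 1)))
          ((Submodule.span ℚ ((fun f : AbstractFamily N => fun j => ((f.vec j : ℚ))) '' F)).restrictScalars ℤ) := by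
      rw [Submodule.span_le]
      rintro _ ⟨f, hf, rfl⟩
      simp only [Set.mem_preimage, SetLike.mem_coe, Submodule.mem_comap,
        Submodule.restrictScalars_mem]
      exact Submodule.subset_span ⟨f, hf, rfl⟩
    exact hle hmem
end

section
/- Let F be a genealogical tree in ℤ^m and λ ∈ ⟨F⟩ = span_ℤ(F). If all elements of the support of λ except at most two belong to a single generation A_i, then λ is an integer multiple of a single abstract family of F. -/
section Stmt8Helpers

variable {N : ℕ}

theorem stmt8_genOf_parent {f : AbstractFamily N} {j} (h : f.isParent j) :
    genOf N j = f.gen := by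
  rcases h with h | h
  · rw [h, f.hj1]
  · rw [h, f.hj2]

theorem stmt8_genOf_child {f : AbstractFamily N} {j} (h : f.isChild j) :
    genOf N j = f.gen + 1 := by
  rcases h with h | h
  · rw [h, f.hj3]
  · rw [h, f.hj4]

theorem stmt8_parent_eq {F : Set (AbstractFamily N)} (hF : IsGenTree N F)
    {f g : AbstractFamily N} (hf : f ∈ F) (hg : g ∈ F) {j}
    (hfp : f.isParent j) (hgp : g.isParent j) : f = g := by
  have h1 : genOf N j ≤ N - 1 := by rw [stmt8_genOf_parent hfp]; exact f.gen_le
  obtain ⟨u, -, hu⟩ := hF.parent_unique j h1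
  rw [hu f ⟨hf, (stmt8_genOf_parent hfp).symm, hfp⟩,
      hu g ⟨hg, (stmt8_genOf_parent hgp).symm, hgp⟩]

theorem stmt8_child_eq {F : Set (AbstractFamily N)} (hF : IsGenTree N F)
    {f g : AbstractFamily N} (hf : f ∈ F) (hg : g ∈ F) {j}
    (hfp : f.isChild j) (hgp : g.isChild j) : f = g := by
  have h1 : 2 ≤ genOf N j := by
    rw [stmt8_genOf_child hfp]; have := f.gen_pos; omega
  obtain ⟨u, -, hu⟩ := hF.child_unique j h1
  have e1 : f.gen = genOf N j - 1 := by have h := stmt8_genOf_child hfp; omega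
  have e2 : g.gen = genOf N j - 1 := by have h := stmt8_genOf_child hgp; omega
  rw [hu f ⟨hf, e1, hfp⟩, hu g ⟨hg, e2, hgp⟩]

end Stmt8Helpers


/-- If `λ ∈ ⟨F⟩ = span_ℤ(F)` and all elements of the support of `λ` except at most two
belong to the single generation `A_i`, then `λ` is an integer multiple of the vector of
a single abstract family of `F`. -/
theorem stmt8 (N : ℕ) (hN : 2 ≤ N) (F : Set (AbstractFamily N)) (hF : IsGenTree N F)
    (lam : Fin (N * 2 ^ (N - 1)) → ℤ)
    (hspan : lam ∈ Submodule.span ℤ (AbstractFamily.vec '' F))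
    (i : ℕ)
    (hsupp : (Finset.univ.filter fun j => lam j ≠ 0 ∧ genOf N j ≠ i).card ≤ 2) :
    ∃ f ∈ F, ∃ c : ℤ, lam = c • f.vec := by
  rw [Finsupp.mem_span_image_iff_linearCombination] at hspan
  obtain ⟨c, hcsupp, hlam⟩ := hspan
  rw [Finsupp.mem_supported] at hcsupp
  have hmemF : ∀ f ∈ c.support, f ∈ F := fun f hf => hcsupp hf
  have hmpos : 0 < N * 2 ^ (N - 1) := by positivity
  -- coordinate formula
  have hval : ∀ j, lam j =
      (∑ f ∈ c.support, c f * ((if j = f.j1 then (1:ℤ) else 0) + (if j = f.j2 then 1 else 0)))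
    - (∑ f ∈ c.support, c f * ((if j = f.j3 then (1:ℤ) else 0) + (if j = f.j4 then 1 else 0))) := by
    intro j
    have h1 : lam j = ∑ f ∈ c.support, c f * AbstractFamily.vec f j := by
      rw [← hlam, Finsupp.linearCombination_apply, Finsupp.sum, Finset.sum_apply]
      simp [smul_eq_mul]
    rw [h1, ← Finset.sum_sub_distrib]
    refine Finset.sum_congr rfl fun f _ => ?_
    simp only [AbstractFamily.vec, Pi.add_apply, Pi.sub_apply, Pi.single_apply]
    ring
  have hsumP_eq : ∀ (j) (f₀ : AbstractFamily N), f₀ ∈ F → f₀.isParent j →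
      (∑ f ∈ c.support, c f * ((if j = f.j1 then (1:ℤ) else 0) + (if j = f.j2 then 1 else 0)))
        = c f₀ := by
    intro j f₀ hf₀ hp
    have key : (∑ f ∈ c.support, c f * ((if j = f.j1 then (1:ℤ) else 0) + (if j = f.j2 then 1 else 0)))
        = c f₀ * ((if j = f₀.j1 then (1:ℤ) else 0) + (if j = f₀.j2 then 1 else 0)) := by
      refine Finset.sum_eq_single f₀ (fun f hf hne => ?_) (fun hf₀s => ?_)
      · have h1 : ¬ j = f.j1 := fun h => hne (stmt8_parent_eq hF (hmemF f hf) hf₀ (Or.inl h) hp)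
        have h2 : ¬ j = f.j2 := fun h => hne (stmt8_parent_eq hF (hmemF f hf) hf₀ (Or.inr h) hp)
        rw [if_neg h1, if_neg h2]; ring
      · rw [Finsupp.notMem_support_iff.mp hf₀s]; ring
    rw [key]
    rcases hp with h | h
    · rw [if_pos h, if_neg fun h2 => f₀.parents_ne (h.symm.trans h2)]; ring
    · rw [if_neg fun h2 => f₀.parents_ne (h2.symm.trans h), if_pos h]; ring
  have hsumC_eq : ∀ (j) (f₀ : AbstractFamily N), f₀ ∈ F → f₀.isChild j →
      (∑ f ∈ c.support, c f * ((if j = f.j3 then (1:ℤ) else 0) + (if j = f.j4 then 1 else 0)))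
        = c f₀ := by
    intro j f₀ hf₀ hp
    have key : (∑ f ∈ c.support, c f * ((if j = f.j3 then (1:ℤ) else 0) + (if j = f.j4 then 1 else 0)))
        = c f₀ * ((if j = f₀.j3 then (1:ℤ) else 0) + (if j = f₀.j4 then 1 else 0)) := by
      refine Finset.sum_eq_single f₀ (fun f hf hne => ?_) (fun hf₀s => ?_)
      · have h1 : ¬ j = f.j3 := fun h => hne (stmt8_child_eq hF (hmemF f hf) hf₀ (Or.inl h) hp)
        have h2 : ¬ j = f.j4 := fun h => hne (stmt8_child_eq hF (hmemF f hf) hf₀ (Or.inr h) hp)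
        rw [if_neg h1, if_neg h2]; ring
      · rw [Finsupp.notMem_support_iff.mp hf₀s]; ring
    rw [key]
    rcases hp with h | h
    · rw [if_pos h, if_neg fun h2 => f₀.children_ne (h.symm.trans h2)]; ring
    · rw [if_neg fun h2 => f₀.children_ne (h2.symm.trans h), if_pos h]; ring
  have hsumP_zero : ∀ j, ¬ (genOf N j ≤ N - 1) →
      (∑ f ∈ c.support, c f * ((if j = f.j1 then (1:ℤ) else 0) + (if j = f.j2 then 1 else 0)))
        = 0 := by
    intro j hj
    refine Finset.sum_eq_zero fun f _ => ?_
    have h1 : ¬ j = f.j1 := fun h => hj (by rw [stmt8_genOf_parent (Or.inl h : f.isParent j)]; exact f.gen_le)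
    have h2 : ¬ j = f.j2 := fun h => hj (by rw [stmt8_genOf_parent (Or.inr h : f.isParent j)]; exact f.gen_le)
    rw [if_neg h1, if_neg h2]; ring
  have hsumC_zero : ∀ j, genOf N j < 2 →
      (∑ f ∈ c.support, c f * ((if j = f.j3 then (1:ℤ) else 0) + (if j = f.j4 then 1 else 0)))
        = 0 := by
    intro j hj
    refine Finset.sum_eq_zero fun f _ => ?_
    have hgp := f.gen_pos
    have h1 : ¬ j = f.j3 := fun h => by
      have := stmt8_genOf_child (Or.inl h : f.isChild j); omega
    have h2 : ¬ j = f.j4 := fun h => by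
      have := stmt8_genOf_child (Or.inr h : f.isChild j); omega
    rw [if_neg h1, if_neg h2]; ring
  have hlamval : ∀ (j) (fp fc : AbstractFamily N), fp ∈ F → fc ∈ F →
      fp.isParent j → fc.isChild j → lam j = c fp - c fc := by
    intro j fp fc h1 h2 h3 h4
    rw [hval j, hsumP_eq j fp h1 h3, hsumC_eq j fc h2 h4]
  have hlamval_top : ∀ (j) (fp : AbstractFamily N), fp ∈ F → fp.isParent j →
      genOf N j < 2 → lam j = c fp := by
    intro j fp h1 h3 h5
    rw [hval j, hsumP_eq j fp h1 h3, hsumC_zero j h5, sub_zero]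
  have hlamval_bot : ∀ (j) (fc : AbstractFamily N), fc ∈ F → fc.isChild j →
      ¬ (genOf N j ≤ N - 1) → lam j = -c fc := by
    intro j fc h1 h3 h5
    rw [hval j, hsumP_zero j h5, hsumC_eq j fc h1 h3, zero_sub]
  -- finishing lemma
  have hfinish : ∀ f₀ : AbstractFamily N, f₀ ∈ F → (∀ f ∈ c.support, f = f₀) →
      ∃ f ∈ F, ∃ a : ℤ, lam = a • f.vec := by
    intro f₀ hf₀F hsub
    refine ⟨f₀, hf₀F, c f₀, ?_⟩
    rw [← hlam, Finsupp.linearCombination_apply, Finsupp.sum,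
      Finset.sum_subset (fun f hf => Finset.mem_singleton.mpr (hsub f hf))
        (fun x _ hx => by rw [Finsupp.notMem_support_iff.mp hx, zero_smul]),
      Finset.sum_singleton]
  -- cardinality helpers
  have hmemΦ : ∀ j, lam j ≠ 0 → genOf N j ≠ i →
      j ∈ (Finset.univ.filter fun j => lam j ≠ 0 ∧ genOf N j ≠ i) := by
    intro j h1 h2
    simp only [Finset.mem_filter, Finset.mem_univ, true_and]
    exact ⟨h1, h2⟩
  have hcard3 : ∀ a b d : Fin (N * 2 ^ (N - 1)), a ≠ b → a ≠ d → b ≠ d →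
      (lam a ≠ 0 ∧ genOf N a ≠ i) → (lam b ≠ 0 ∧ genOf N b ≠ i) →
      (lam d ≠ 0 ∧ genOf N d ≠ i) → False := by
    intro a b d hab had hbd ha hb hd
    have hsub : ({a, b, d} : Finset _) ⊆ (Finset.univ.filter fun j => lam j ≠ 0 ∧ genOf N j ≠ i) := by
      intro x hx
      simp only [Finset.mem_insert, Finset.mem_singleton] at hx
      rcases hx with rfl | rfl | rfl
      · exact hmemΦ _ ha.1 ha.2
      · exact hmemΦ _ hb.1 hb.2
      · exact hmemΦ _ hd.1 hd.2
    have h3 : ({a, b, d} : Finset _).card = 3 := by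
      rw [Finset.card_insert_of_notMem (by simp [hab, had]),
          Finset.card_insert_of_notMem (by simp [hbd]), Finset.card_singleton]
    have := Finset.card_le_card hsub
    omega
  have hcard4 : ∀ a b a' b' : Fin (N * 2 ^ (N - 1)),
      a ≠ b → a ≠ a' → a ≠ b' → b ≠ a' → b ≠ b' → a' ≠ b' →
      (lam a ≠ 0 ∧ genOf N a ≠ i) → (lam b ≠ 0 ∧ genOf N b ≠ i) →
      (lam a' ≠ 0 ∧ genOf N a' ≠ i) → (lam b' ≠ 0 ∧ genOf N b' ≠ i) → False := by
    intro a b a' b' hab haa hab' hba hbb hab2 ha hb ha' hb'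
    have hsub : ({a, b, a', b'} : Finset _) ⊆
        (Finset.univ.filter fun j => lam j ≠ 0 ∧ genOf N j ≠ i) := by
      intro x hx
      simp only [Finset.mem_insert, Finset.mem_singleton] at hx
      rcases hx with rfl | rfl | rfl | rfl
      · exact hmemΦ _ ha.1 ha.2
      · exact hmemΦ _ hb.1 hb.2
      · exact hmemΦ _ ha'.1 ha'.2
      · exact hmemΦ _ hb'.1 hb'.2
    have h4 : ({a, b, a', b'} : Finset _).card = 4 := by
      rw [Finset.card_insert_of_notMem (by simp [hab, haa, hab']),
          Finset.card_insert_of_notMem (by simp [hba, hbb]),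
          Finset.card_insert_of_notMem (by simp [hab2]), Finset.card_singleton]
    have := Finset.card_le_card hsub
    omega
  -- empty / nonempty support
  rcases Finset.eq_empty_or_nonempty c.support with hse | hsne
  · have hc0 : c = 0 := Finsupp.support_eq_empty.mp hse
    have hlam0 : lam = 0 := by rw [← hlam, hc0]; simp
    have hz : (0:ℕ) / 2 ^ (N - 1) = 0 := Nat.zero_div _
    have hj : genOf N ⟨0, hmpos⟩ ≤ N - 1 := by
      simp only [genOf, hz]
      omega
    obtain ⟨f, ⟨hfF, -, -⟩, -⟩ := hF.parent_unique ⟨0, hmpos⟩ hj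
    exact ⟨f, hfF, 0, by rw [hlam0]; simp⟩
  · have hne' : (c.support.image fun f => f.gen).Nonempty := hsne.image _
    set gmin := (c.support.image fun f => f.gen).min' hne' with hgmindef
    set gmax := (c.support.image fun f => f.gen).max' hne' with hgmaxdef
    obtain ⟨fmin, hfmin_s, hfmin_gen⟩ :=
      Finset.mem_image.mp ((c.support.image fun f => f.gen).min'_mem hne')
    obtain ⟨fmax, hfmax_s, hfmax_gen⟩ :=
      Finset.mem_image.mp ((c.support.image fun f => f.gen).max'_mem hne')
    have hge : ∀ f ∈ c.support, gmin ≤ f.gen ∧ f.gen ≤ gmax := fun f hf =>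
      ⟨Finset.min'_le _ _ (Finset.mem_image_of_mem _ hf),
       Finset.le_max' _ _ (Finset.mem_image_of_mem _ hf)⟩
    have hgmin1 : 1 ≤ gmin := by have := fmin.gen_pos; omega
    have hminmax : gmin ≤ gmax := by have := (hge fmax hfmax_s).1; omega
    have hgmaxle : gmax ≤ N - 1 := by have := fmax.gen_le; omega
    have hstepA : ∀ f ∈ c.support, f.gen = gmin → lam f.j1 = c f ∧ lam f.j2 = c f := by
      intro f hf hgen
      have hfF := hmemF f hf
      have key : ∀ j, f.isParent j → lam j = c f := by
        intro j hp
        by_cases h2 : 2 ≤ genOf N j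
        · obtain ⟨g, ⟨hgF, hggen, hgc⟩, -⟩ := hF.child_unique j h2
          have hz : c g = 0 := by
            by_contra hne
            have hgs : g ∈ c.support := Finsupp.mem_support_iff.mpr hne
            have hle := (hge g hgs).1
            have he := stmt8_genOf_parent hp
            omega
          rw [hlamval j f g hfF hgF hp hgc, hz, sub_zero]
        · exact hlamval_top j f hfF hp (by omega)
      exact ⟨key f.j1 (Or.inl rfl), key f.j2 (Or.inr rfl)⟩
    have hstepB : ∀ f ∈ c.support, f.gen = gmax → lam f.j3 = -c f ∧ lam f.j4 = -c f := by
      intro f hf hgen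
      have hfF := hmemF f hf
      have key : ∀ j, f.isChild j → lam j = -c f := by
        intro j hcj
        by_cases h2 : genOf N j ≤ N - 1
        · obtain ⟨g, ⟨hgF, hggen, hgp⟩, -⟩ := hF.parent_unique j h2
          have hz : c g = 0 := by
            by_contra hne
            have hgs : g ∈ c.support := Finsupp.mem_support_iff.mpr hne
            have hle := (hge g hgs).2
            have he := stmt8_genOf_child hcj
            omega
          rw [hlamval j g f hgF hfF hgp hcj, hz, zero_sub]
        · exact hlamval_bot j f hfF hcj h2
      exact ⟨key f.j3 (Or.inl rfl), key f.j4 (Or.inr rfl)⟩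
    have hcfmin : c fmin ≠ 0 := Finsupp.mem_support_iff.mp hfmin_s
    have hcfmax : c fmax ≠ 0 := Finsupp.mem_support_iff.mp hfmax_s
    have hfminF := hmemF fmin hfmin_s
    have hfmaxF := hmemF fmax hfmax_s
    obtain ⟨hA1, hA2⟩ := hstepA fmin hfmin_s hfmin_gen
    obtain ⟨hB3, hB4⟩ := hstepB fmax hfmax_s hfmax_gen
    have hgmin_j1 : genOf N fmin.j1 = gmin := by rw [fmin.hj1, hfmin_gen]
    have hgmin_j2 : genOf N fmin.j2 = gmin := by rw [fmin.hj2, hfmin_gen]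
    have hgmax_j3 : genOf N fmax.j3 = gmax + 1 := by rw [fmax.hj3, hfmax_gen]
    have hgmax_j4 : genOf N fmax.j4 = gmax + 1 := by rw [fmax.hj4, hfmax_gen]
    by_cases hgi : gmin = i
    · -- i = gmin : budget consumed by children of the unique top family fmax
      have hni : gmax + 1 ≠ i := by omega
      have hUuniq : ∀ f ∈ c.support, ∀ f' ∈ c.support, f.gen = gmax → f'.gen = gmax → f = f' := by
        intro f hf f' hf' h1 h2
        by_contra hne
        obtain ⟨h3, h4⟩ := hstepB f hf h1
        obtain ⟨h3', h4'⟩ := hstepB f' hf' h2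
        have hcf : c f ≠ 0 := Finsupp.mem_support_iff.mp hf
        have hcf' : c f' ≠ 0 := Finsupp.mem_support_iff.mp hf'
        have g3 : genOf N f.j3 = gmax + 1 := by rw [f.hj3, h1]
        have g4 : genOf N f.j4 = gmax + 1 := by rw [f.hj4, h1]
        have g3' : genOf N f'.j3 = gmax + 1 := by rw [f'.hj3, h2]
        have g4' : genOf N f'.j4 = gmax + 1 := by rw [f'.hj4, h2]
        have hfF := hmemF f hf
        have hf'F := hmemF f' hf'
        refine hcard4 f.j3 f.j4 f'.j3 f'.j4 f.children_ne
          (fun h => hne (stmt8_child_eq hF hfF hf'F (Or.inl rfl) (Or.inl h)))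
          (fun h => hne (stmt8_child_eq hF hfF hf'F (Or.inl rfl) (Or.inr h)))
          (fun h => hne (stmt8_child_eq hF hfF hf'F (Or.inr rfl) (Or.inl h)))
          (fun h => hne (stmt8_child_eq hF hfF hf'F (Or.inr rfl) (Or.inr h)))
          f'.children_ne
          ⟨by rw [h3]; exact neg_ne_zero.mpr hcf, by rw [g3]; exact hni⟩
          ⟨by rw [h4]; exact neg_ne_zero.mpr hcf, by rw [g4]; exact hni⟩
          ⟨by rw [h3']; exact neg_ne_zero.mpr hcf', by rw [g3']; exact hni⟩
          ⟨by rw [h4']; exact neg_ne_zero.mpr hcf', by rw [g4']; exact hni⟩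
      have hout : ∀ j, lam j ≠ 0 → genOf N j ≠ i → j = fmax.j3 ∨ j = fmax.j4 := by
        intro j h1 h2
        by_contra hcon
        push_neg at hcon
        exact hcard3 j fmax.j3 fmax.j4 hcon.1 hcon.2 fmax.children_ne ⟨h1, h2⟩
          ⟨by rw [hB3]; exact neg_ne_zero.mpr hcfmax, by rw [hgmax_j3]; exact hni⟩
          ⟨by rw [hB4]; exact neg_ne_zero.mpr hcfmax, by rw [hgmax_j4]; exact hni⟩
      rcases eq_or_lt_of_le hminmax with heq | hlt
      · exact hfinish fmax hfmaxF fun f hf =>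
          hUuniq f hf fmax hfmax_s (by have := hge f hf; omega) hfmax_gen
      · exfalso
        have hg1 : genOf N fmax.j1 = gmax := by rw [fmax.hj1, hfmax_gen]
        have hlj1 : lam fmax.j1 = 0 := by
          by_contra h1
          rcases hout _ h1 (by rw [hg1]; omega) with h | h
          · rw [← h, hg1] at hgmax_j3; omega
          · rw [← h, hg1] at hgmax_j4; omega
        have h2g : 2 ≤ genOf N fmax.j1 := by rw [hg1]; omega
        obtain ⟨g₁, ⟨hg₁F, hg₁gen, hg₁c⟩, -⟩ := hF.child_unique fmax.j1 h2g
        have hc₁ : c g₁ = c fmax := by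
          have h5 := hlamval fmax.j1 fmax g₁ hfmaxF hg₁F (Or.inl rfl) hg₁c
          rw [hlj1] at h5; omega
        have hg₁s : g₁ ∈ c.support :=
          Finsupp.mem_support_iff.mpr (by rw [hc₁]; exact hcfmax)
        have hg₁gen' : g₁.gen = gmax - 1 := by rw [hg₁gen, hg1]
        have main : ∀ sb : Fin (N * 2 ^ (N - 1)), g₁.isChild sb → sb ≠ fmax.j1 → False := by
          intro sb hsbc hsbne
          have hgsb : genOf N sb = gmax := by
            have h6 := stmt8_genOf_child hsbc; omega
          have hlsb : lam sb = 0 := by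
            by_contra h1
            rcases hout sb h1 (by rw [hgsb]; omega) with h | h
            · rw [← h, hgsb] at hgmax_j3; omega
            · rw [← h, hgsb] at hgmax_j4; omega
          have hsble : genOf N sb ≤ N - 1 := by rw [hgsb]; omega
          obtain ⟨g₂, ⟨hg₂F, hg₂gen, hg₂p⟩, -⟩ := hF.parent_unique sb hsble
          have hc₂ : c g₂ = c g₁ := by
            have h5 := hlamval sb g₂ g₁ hg₂F hg₁F hg₂p hsbc
            rw [hlsb] at h5; omega
          have hg₂s : g₂ ∈ c.support :=
            Finsupp.mem_support_iff.mpr (by rw [hc₂, hc₁]; exact hcfmax)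
          have hg₂gen' : g₂.gen = gmax := by rw [hg₂gen, hgsb]
          have hg₂eq : g₂ = fmax := hUuniq g₂ hg₂s fmax hfmax_s hg₂gen' hfmax_gen
          rw [hg₂eq] at hg₂p
          have hsb2 : sb = fmax.j2 := by
            rcases hg₂p with h | h
            · exact absurd h hsbne
            · exact h
          have hss : (fmax.j1 = g₁.j3 ∧ sb = g₁.j4) ∨ (fmax.j1 = g₁.j4 ∧ sb = g₁.j3) := by
            rcases hg₁c with h | h <;> rcases hsbc with h' | h'
            · exact absurd (h'.trans h.symm) hsbne
            · exact Or.inl ⟨h, h'⟩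
            · exact Or.inr ⟨h, h'⟩
            · exact absurd (h'.trans h.symm) hsbne
          exact hF.sibling_ne_spouse g₁ hg₁F fmax hfmaxF fmax.j1 sb fmax.j2 hss
            (Or.inl ⟨rfl, rfl⟩) hsb2
        rcases hg₁c with hcj | hcj
        · exact main g₁.j4 (Or.inr rfl) fun h => g₁.children_ne (hcj.symm.trans h.symm)
        · exact main g₁.j3 (Or.inl rfl) fun h => g₁.children_ne (h.trans hcj)
    · -- gmin ≠ i
      have hgi2 : gmax + 1 = i := by
        by_contra hgi2
        exact hcard4 fmin.j1 fmin.j2 fmax.j3 fmax.j4 fmin.parents_ne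
          (fun h => by rw [h, hgmax_j3] at hgmin_j1; omega)
          (fun h => by rw [h, hgmax_j4] at hgmin_j1; omega)
          (fun h => by rw [h, hgmax_j3] at hgmin_j2; omega)
          (fun h => by rw [h, hgmax_j4] at hgmin_j2; omega)
          fmax.children_ne
          ⟨by rw [hA1]; exact hcfmin, by rw [hgmin_j1]; exact hgi⟩
          ⟨by rw [hA2]; exact hcfmin, by rw [hgmin_j2]; exact hgi⟩
          ⟨by rw [hB3]; exact neg_ne_zero.mpr hcfmax, by rw [hgmax_j3]; exact hgi2⟩
          ⟨by rw [hB4]; exact neg_ne_zero.mpr hcfmax, by rw [hgmax_j4]; exact hgi2⟩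
      have hTuniq : ∀ f ∈ c.support, ∀ f' ∈ c.support, f.gen = gmin → f'.gen = gmin → f = f' := by
        intro f hf f' hf' h1 h2
        by_contra hne
        obtain ⟨h3, h4⟩ := hstepA f hf h1
        obtain ⟨h3', h4'⟩ := hstepA f' hf' h2
        have hcf : c f ≠ 0 := Finsupp.mem_support_iff.mp hf
        have hcf' : c f' ≠ 0 := Finsupp.mem_support_iff.mp hf'
        have g1 : genOf N f.j1 = gmin := by rw [f.hj1, h1]
        have g2 : genOf N f.j2 = gmin := by rw [f.hj2, h1]
        have g1' : genOf N f'.j1 = gmin := by rw [f'.hj1, h2]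
        have g2' : genOf N f'.j2 = gmin := by rw [f'.hj2, h2]
        have hfF := hmemF f hf
        have hf'F := hmemF f' hf'
        refine hcard4 f.j1 f.j2 f'.j1 f'.j2 f.parents_ne
          (fun h => hne (stmt8_parent_eq hF hfF hf'F (Or.inl rfl) (Or.inl h)))
          (fun h => hne (stmt8_parent_eq hF hfF hf'F (Or.inl rfl) (Or.inr h)))
          (fun h => hne (stmt8_parent_eq hF hfF hf'F (Or.inr rfl) (Or.inl h)))
          (fun h => hne (stmt8_parent_eq hF hfF hf'F (Or.inr rfl) (Or.inr h)))
          f'.parents_ne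
          ⟨by rw [h3]; exact hcf, by rw [g1]; exact hgi⟩
          ⟨by rw [h4]; exact hcf, by rw [g2]; exact hgi⟩
          ⟨by rw [h3']; exact hcf', by rw [g1']; exact hgi⟩
          ⟨by rw [h4']; exact hcf', by rw [g2']; exact hgi⟩
      have hout : ∀ j, lam j ≠ 0 → genOf N j ≠ i → j = fmin.j1 ∨ j = fmin.j2 := by
        intro j h1 h2
        by_contra hcon
        push_neg at hcon
        exact hcard3 j fmin.j1 fmin.j2 hcon.1 hcon.2 fmin.parents_ne ⟨h1, h2⟩
          ⟨by rw [hA1]; exact hcfmin, by rw [hgmin_j1]; exact hgi⟩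
          ⟨by rw [hA2]; exact hcfmin, by rw [hgmin_j2]; exact hgi⟩
      rcases eq_or_lt_of_le hminmax with heq | hlt
      · exact hfinish fmin hfminF fun f hf =>
          hTuniq f hf fmin hfmin_s (by have := hge f hf; omega) hfmin_gen
      · exfalso
        have hg3 : genOf N fmin.j3 = gmin + 1 := by rw [fmin.hj3, hfmin_gen]
        have hlj3 : lam fmin.j3 = 0 := by
          by_contra h1
          rcases hout _ h1 (by rw [hg3]; omega) with h | h
          · rw [← h, hg3] at hgmin_j1; omega
          · rw [← h, hg3] at hgmin_j2; omega
        have h2g : genOf N fmin.j3 ≤ N - 1 := by rw [hg3]; omega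
        obtain ⟨g₁, ⟨hg₁F, hg₁gen, hg₁p⟩, -⟩ := hF.parent_unique fmin.j3 h2g
        have hc₁ : c g₁ = c fmin := by
          have h5 := hlamval fmin.j3 g₁ fmin hg₁F hfminF hg₁p (Or.inl rfl)
          rw [hlj3] at h5; omega
        have hg₁s : g₁ ∈ c.support :=
          Finsupp.mem_support_iff.mpr (by rw [hc₁]; exact hcfmin)
        have hg₁gen' : g₁.gen = gmin + 1 := by rw [hg₁gen, hg3]
        have main : ∀ p : Fin (N * 2 ^ (N - 1)), g₁.isParent p → p ≠ fmin.j3 → False := by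
          intro p hpp hpne
          have hgp : genOf N p = gmin + 1 := by
            have h6 := stmt8_genOf_parent hpp; omega
          have hlp : lam p = 0 := by
            by_contra h1
            rcases hout p h1 (by rw [hgp]; omega) with h | h
            · rw [← h, hgp] at hgmin_j1; omega
            · rw [← h, hgp] at hgmin_j2; omega
          have hple : 2 ≤ genOf N p := by rw [hgp]; omega
          obtain ⟨g₂, ⟨hg₂F, hg₂gen, hg₂c⟩, -⟩ := hF.child_unique p hple
          have hc₂ : c g₂ = c g₁ := by
            have h5 := hlamval p g₁ g₂ hg₁F hg₂F hpp hg₂c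
            rw [hlp] at h5; omega
          have hg₂s : g₂ ∈ c.support :=
            Finsupp.mem_support_iff.mpr (by rw [hc₂, hc₁]; exact hcfmin)
          have hg₂gen' : g₂.gen = gmin := by omega
          have hg₂eq : g₂ = fmin := hTuniq g₂ hg₂s fmin hfmin_s hg₂gen' hfmin_gen
          rw [hg₂eq] at hg₂c
          have hp4 : p = fmin.j4 := by
            rcases hg₂c with h | h
            · exact absurd h hpne
            · exact h
          have hss : (fmin.j3 = g₁.j1 ∧ p = g₁.j2) ∨ (fmin.j3 = g₁.j2 ∧ p = g₁.j1) := by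
            rcases hg₁p with h | h <;> rcases hpp with h' | h'
            · exact absurd (h'.trans h.symm) hpne
            · exact Or.inl ⟨h, h'⟩
            · exact Or.inr ⟨h, h'⟩
            · exact absurd (h'.trans h.symm) hpne
          exact hF.sibling_ne_spouse fmin hfminF g₁ hg₁F fmin.j3 fmin.j4 p
            (Or.inl ⟨rfl, rfl⟩) hss hp4.symm
        rcases hg₁p with hpj | hpj
        · exact main g₁.j2 (Or.inr rfl) fun h => g₁.parents_ne (hpj.symm.trans h.symm)
        · exact main g₁.j1 (Or.inl rfl) fun h => g₁.parents_ne (h.trans hpj)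
end
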